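/- Feasibility of the descent-direction cone program: given a finite set H of points h ≠ x, there exists a unit vector d and β < 0 with ⟨d, (h − x)/‖h − x‖⟩ ≤ β for all h ∈ H if and only if 0 does not lie in the convex hull of the normalized vectors { (h − x)/‖h − x‖ : h ∈ H }. -/

import Mathlib

theorem dd_soc_feasibility_gordan (n : ℕ) (x : EuclideanSpace ℝ (Fin n))
    (H : Finset (EuclideanSpace ℝ (Fin n))) (hne : H.Nonempty) (hx : x ∉ H) :
    (∃ (d : EuclideanSpace ℝ (Fin n)) (β : ℝ), ‖d‖ = 1 ∧ β < 0 ∧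
        ∀ h ∈ H, (inner ℝ d (‖h - x‖⁻¹ • (h - x)) : ℝ) ≤ β) ↔
      (0 : EuclideanSpace ℝ (Fin n)) ∉
        convexHull ℝ ((fun h => ‖h - x‖⁻¹ • (h - x)) '' (H : Set (EuclideanSpace ℝ (Fin n)))) := by
  set S : Set (EuclideanSpace ℝ (Fin n)) :=
    (fun h => ‖h - x‖⁻¹ • (h - x)) '' (H : Set (EuclideanSpace ℝ (Fin n))) with hS
  constructor
  · rintro ⟨d, β, hd, hβ, hle⟩ h0
    have hconv : Convex ℝ {y : EuclideanSpace ℝ (Fin n) | (inner ℝ d y : ℝ) ≤ β} := by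
      apply convex_halfSpace_le
      exact (innerSL ℝ d).toLinearMap.isLinear
    have hsub : S ⊆ {y : EuclideanSpace ℝ (Fin n) | (inner ℝ d y : ℝ) ≤ β} := by
      rintro y ⟨h, hh, rfl⟩
      exact hle h hh
    have := convexHull_min hsub hconv h0
    simp only [Set.mem_setOf_eq, inner_zero_right] at this
    linarith
  · intro h0
    have hconv : Convex ℝ (convexHull ℝ S) := convex_convexHull ℝ S
    have hcl : IsClosed (convexHull ℝ S) := by
      have hfin : S.Finite := (H.finite_toSet.image _)
      exact (hfin.isCompact_convexHull (𝕜 := ℝ)).isClosed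
    obtain ⟨f, u, hfu, hu0⟩ := geometric_hahn_banach_closed_point hconv hcl h0
    simp only [map_zero] at hu0
    obtain ⟨v, hv⟩ := (InnerProductSpace.toDual ℝ (EuclideanSpace ℝ (Fin n))).surjective f
    have hvinner : ∀ y, (inner ℝ v y : ℝ) = f y := fun y => by rw [← hv]; rfl
    obtain ⟨h₀, hh₀⟩ := hne
    have hmem : (‖h₀ - x‖⁻¹ • (h₀ - x)) ∈ convexHull ℝ S :=
      subset_convexHull ℝ S ⟨h₀, hh₀, rfl⟩
    have hvne : v ≠ 0 := by
      intro hv0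
      have := hfu _ hmem
      rw [← hvinner] at this
      rw [hv0, inner_zero_left] at this
      linarith
    have hnv : (0:ℝ) < ‖v‖ := norm_pos_iff.mpr hvne
    refine ⟨‖v‖⁻¹ • v, ‖v‖⁻¹ * u, ?_, ?_, ?_⟩
    · rw [norm_smul, norm_inv, norm_norm, inv_mul_cancel₀ hnv.ne']
    · exact mul_neg_of_pos_of_neg (inv_pos.mpr hnv) hu0
    · intro h hh
      have hmem' : (‖h - x‖⁻¹ • (h - x)) ∈ convexHull ℝ S :=
        subset_convexHull ℝ S ⟨h, hh, rfl⟩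
      have := hfu _ hmem'
      rw [← hvinner] at this
      rw [real_inner_smul_left]
      have hinv : (0:ℝ) < ‖v‖⁻¹ := inv_pos.mpr hnv
      nlinarith [this]
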